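/- arXiv:1409.5748 — 2 statements merged into one kernel-verified Lean document; each statement's English description precedes it below -/
import Mathlib

section
/- Let a : ℝ → ℝ be bounded on compact sets, let b > 0 and T ≥ 0. If ε^b · a(ε⁻¹) → 0 as ε → 0⁺, then sup_{t ∈ [0,T]} ε^b · |a(t·ε⁻¹)| → 0 as ε → 0⁺. -/
open Filter Set

/-- If `a : ℝ → ℝ` is bounded on compact sets, `b > 0`, `T ≥ 0`, and
`ε^b * a(ε⁻¹) → 0` as `ε → 0⁺`, then `sup_{t ∈ [0,T]} ε^b * |a (t ε⁻¹)| → 0` as `ε → 0⁺`. -/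
theorem stmt0 (a : ℝ → ℝ) (b T : ℝ) (hb : 0 < b) (hT : 0 ≤ T)
    (hbdd : ∀ K : Set ℝ, IsCompact K → ∃ C : ℝ, ∀ x ∈ K, |a x| ≤ C)
    (h : Tendsto (fun ε : ℝ => ε ^ b * a ε⁻¹) (nhdsWithin 0 (Set.Ioi 0)) (nhds 0)) :
    Tendsto (fun ε : ℝ => ⨆ t : Set.Icc (0:ℝ) T, ε ^ b * |a ((t : ℝ) * ε⁻¹)|)
      (nhdsWithin 0 (Set.Ioi 0)) (nhds 0) := by
  haveI : Nonempty (Set.Icc (0:ℝ) T) := ⟨⟨0, le_refl 0, hT⟩⟩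
  rw [Metric.tendsto_nhdsWithin_nhds] at h ⊢
  intro η ηpos
  have hTb : (0:ℝ) ≤ T ^ b := Real.rpow_nonneg hT b
  set η' : ℝ := η / (2 * (T ^ b + 1)) with hη'def
  have hη'pos : 0 < η' := by positivity
  obtain ⟨δ₁, hδ₁pos, hδ₁⟩ := h η' hη'pos
  set δ₀ : ℝ := min δ₁ 1 with hδ₀def
  have hδ₀pos : 0 < δ₀ := lt_min hδ₁pos one_pos
  obtain ⟨C, hC⟩ := hbdd (Icc 0 δ₀⁻¹) isCompact_Icc
  have hC0 : 0 ≤ C := le_trans (abs_nonneg _) (hC 0 ⟨le_refl 0, by positivity⟩)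
  have hpow : Tendsto (fun ε : ℝ => ε ^ b * C) (nhds 0) (nhds 0) := by
    have hc : ContinuousAt (fun ε : ℝ => ε ^ b * C) 0 :=
      ContinuousAt.mul (Real.continuousAt_rpow_const 0 b (Or.inr hb.le)) continuousAt_const
    simpa [Real.zero_rpow hb.ne'] using hc.tendsto
  have hpow' : ∀ᶠ ε in nhds (0:ℝ), ε ^ b * C < η := hpow.eventually_lt_const ηpos
  obtain ⟨δ₂, hδ₂pos, hδ₂⟩ := Metric.eventually_nhds_iff.mp hpow'
  refine ⟨δ₂, hδ₂pos, ?_⟩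
  intro ε hε hdist
  have hεpos : 0 < ε := hε
  have hεb : 0 < ε ^ b := Real.rpow_pos_of_pos hεpos b
  have hεC : ε ^ b * C < η := hδ₂ hdist
  set M : ℝ := max (ε ^ b * C) (T ^ b * η') with hM
  have hbound : ∀ t : Set.Icc (0:ℝ) T, ε ^ b * |a ((t : ℝ) * ε⁻¹)| ≤ M := by
    rintro ⟨t, ht0, htT⟩
    dsimp only
    rcases le_or_gt (t * ε⁻¹) δ₀⁻¹ with hx | hx
    · refine le_trans ?_ (le_max_left _ _)
      exact mul_le_mul_of_nonneg_left (hC _ ⟨by positivity, hx⟩) hεb.le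
    · refine le_trans ?_ (le_max_right _ _)
      have hxpos : 0 < t * ε⁻¹ := lt_trans (by positivity) hx
      have htpos : 0 < t := by
        rcases ht0.lt_or_eq with h' | h'
        · exact h'
        · exfalso; rw [← h'] at hxpos; simp at hxpos
      set δ : ℝ := (t * ε⁻¹)⁻¹ with hδdef
      have hδpos : 0 < δ := inv_pos.mpr hxpos
      have hδlt : δ < δ₀ := inv_lt_of_inv_lt₀ hδ₀pos hx
      have h1 : δ ^ b * |a δ⁻¹| < η' := by
        have := hδ₁ (mem_Ioi.mpr hδpos)
          (by rw [Real.dist_eq, sub_zero, abs_of_pos hδpos];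
              exact lt_of_lt_of_le hδlt (min_le_left _ _))
        rw [Real.dist_eq, sub_zero, abs_mul,
          abs_of_nonneg (Real.rpow_nonneg hδpos.le b)] at this
        exact this
      have hδinv : δ⁻¹ = t * ε⁻¹ := inv_inv _
      have hε_eq : ε = t * δ := by
        rw [hδdef]; field_simp
      calc ε ^ b * |a (t * ε⁻¹)| = (t * δ) ^ b * |a δ⁻¹| := by rw [← hε_eq, hδinv]
        _ = t ^ b * (δ ^ b * |a δ⁻¹|) := by
            rw [Real.mul_rpow htpos.le hδpos.le]; ring
        _ ≤ T ^ b * (δ ^ b * |a δ⁻¹|) := by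
            apply mul_le_mul_of_nonneg_right (Real.rpow_le_rpow ht0 htT hb.le)
            positivity
        _ ≤ T ^ b * η' := mul_le_mul_of_nonneg_left h1.le hTb
  have hsup_le : (⨆ t : Set.Icc (0:ℝ) T, ε ^ b * |a ((t : ℝ) * ε⁻¹)|) ≤ M :=
    ciSup_le hbound
  have hbdd' : BddAbove (Set.range fun t : Set.Icc (0:ℝ) T => ε ^ b * |a ((t : ℝ) * ε⁻¹)|) :=
    ⟨M, by rintro _ ⟨t, rfl⟩; exact hbound t⟩
  have hsup_nonneg : 0 ≤ (⨆ t : Set.Icc (0:ℝ) T, ε ^ b * |a ((t : ℝ) * ε⁻¹)|) :=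
    le_trans (by positivity) (le_ciSup hbdd' ⟨0, le_refl 0, hT⟩)
  have hMη : M < η := by
    rw [hM, max_lt_iff]
    refine ⟨hεC, ?_⟩
    have : T ^ b * η' ≤ (T ^ b + 1) * η' :=
      mul_le_mul_of_nonneg_right (by linarith) hη'pos.le
    have h2 : (T ^ b + 1) * η' = η / 2 := by
      rw [hη'def]; field_simp
    linarith
  rw [Real.dist_eq, sub_zero, abs_of_nonneg hsup_nonneg]
  exact lt_of_le_of_lt hsup_le hMη
end

section
/- For θ > 0 not an integer, let C^θ(ℝ^d) be the space of bounded functions with bounded derivatives up to order ⌊θ⌋ whose ⌊θ⌋-th derivatives are (θ−⌊θ⌋)-Hölder, with the usual norm. Define on the algebraic tensor product C^θ(ℝ^d) ⊗_a C^θ(ℝ^d) the norm ‖u‖_{C^θ⊗C^θ} = ‖ι(u)‖_{C^{θ,θ}}, where ι(Σ_n u_n ⊗ v_n)(x,z) = Σ_n u_n(x) v_n(z) and ‖·‖_{C^{θ,θ}} is the mixed Hölder norm on functions of (x,z) ∈ ℝ^d × ℝ^d. Then this norm is admissible: ‖u ⊗ v‖ = ‖u‖_{C^θ} ‖v‖_{C^θ}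 for all u, v ∈ C^θ(ℝ^d), and ‖f ⊗ g‖_{L(C^θ ⊗_a C^θ, ℝ)} = ‖f‖_{L(C^θ,ℝ)} ‖g‖_{L(C^θ,ℝ)} for all bounded linear functionals f, g on C^θ(ℝ^d). -/
open Set

/-- The `C^θ` Hölder norm of a function between normed spaces. -/
noncomputable def cNorm {E F : Type*} [NormedAddCommGroup E] [NormedSpace ℝ E]
    [NormedAddCommGroup F] [NormedSpace ℝ F] (θ : ℝ) (u : E → F) : ℝ :=
  (∑ k ∈ Finset.range (⌊θ⌋₊ + 1), ⨆ x : E, ‖iteratedFDeriv ℝ k u x‖) +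
    ⨆ q : {q : E × E // q.1 ≠ q.2},
      ‖iteratedFDeriv ℝ ⌊θ⌋₊ u q.1.1 - iteratedFDeriv ℝ ⌊θ⌋₊ u q.1.2‖ /
        ‖q.1.1 - q.1.2‖ ^ (θ - (⌊θ⌋₊ : ℝ))

/-- Membership in `C^θ`: `⌊θ⌋`-times differentiable with bounded derivatives and
`(θ−⌊θ⌋)`-Hölder top derivatives. -/
def memC {E F : Type*} [NormedAddCommGroup E] [NormedSpace ℝ E]
    [NormedAddCommGroup F] [NormedSpace ℝ F] (θ : ℝ) (u : E → F) : Prop :=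
  ContDiff ℝ (⌊θ⌋₊ : ℕ) u ∧
  (∀ k : ℕ, k ≤ ⌊θ⌋₊ → BddAbove (range fun x : E => ‖iteratedFDeriv ℝ k u x‖)) ∧
  BddAbove (range fun q : {q : E × E // q.1 ≠ q.2} =>
    ‖iteratedFDeriv ℝ ⌊θ⌋₊ u q.1.1 - iteratedFDeriv ℝ ⌊θ⌋₊ u q.1.2‖ /
      ‖q.1.1 - q.1.2‖ ^ (θ - (⌊θ⌋₊ : ℝ)))

/-- The mixed Hölder norm `‖w‖_{C^{θ,θ}}` of `w : ℝ^d × ℝ^d → ℝ`: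
`Σ_{|k|≤⌊θ⌋} sup_x ‖D_x^k w(x,·)‖_{C^θ} + Σ_{|k|=⌊θ⌋} sup_{x≠x'} ‖D_x^k w(x,·) − D_x^k w(x',·)‖_{C^θ}/|x−x'|^{θ−⌊θ⌋}`. -/
noncomputable def cθθNorm {E : Type*} [NormedAddCommGroup E] [NormedSpace ℝ E]
    (θ : ℝ) (w : E × E → ℝ) : ℝ :=
  (∑ k ∈ Finset.range (⌊θ⌋₊ + 1),
      ⨆ x : E, cNorm θ (fun z : E => iteratedFDeriv ℝ k (fun x' => w (x', z)) x)) +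
    ⨆ q : {q : E × E // q.1 ≠ q.2},
      cNorm θ (fun z : E => iteratedFDeriv ℝ ⌊θ⌋₊ (fun x' => w (x', z)) q.1.1 -
          iteratedFDeriv ℝ ⌊θ⌋₊ (fun x' => w (x', z)) q.1.2) /
        ‖q.1.1 - q.1.2‖ ^ (θ - (⌊θ⌋₊ : ℝ))

section Lemmas
variable {E F G : Type*} [NormedAddCommGroup E] [NormedSpace ℝ E]
  [NormedAddCommGroup F] [NormedSpace ℝ F] [NormedAddCommGroup G] [NormedSpace ℝ G]
  {θ : ℝ}

lemma real_iSup_zero {ι : Sort*} : (⨆ _ : ι, (0:ℝ)) = 0 :=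
  le_antisymm (Real.iSup_le (fun _ => le_rfl) le_rfl) (Real.iSup_nonneg fun _ => le_rfl)

lemma cNorm_nonneg (u : E → F) : 0 ≤ cNorm θ u := by
  refine add_nonneg (Finset.sum_nonneg fun k _ => Real.iSup_nonneg fun x => norm_nonneg _)
    (Real.iSup_nonneg fun q => div_nonneg (norm_nonneg _) (Real.rpow_nonneg (norm_nonneg _) _))

lemma memC_zero : memC θ (fun _ : E => (0:F)) := by
  refine ⟨contDiff_const, fun k _ => ?_, ?_⟩
  · refine ⟨0, fun r hr => ?_⟩
    obtain ⟨x, rfl⟩ := hr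
    simp [iteratedFDeriv_zero_fun]
  · refine ⟨0, fun r hr => ?_⟩
    obtain ⟨q, rfl⟩ := hr
    simp [iteratedFDeriv_zero_fun]

lemma cNorm_zero : cNorm θ (fun _ : E => (0:F)) = 0 := by
  unfold cNorm
  simp only [iteratedFDeriv_zero_fun, Pi.zero_apply, norm_zero, sub_zero, zero_div,
    real_iSup_zero, Finset.sum_const_zero, add_zero]

lemma norm_compCMM_eq {k : ℕ} (L : F →L[ℝ] G) (a : ℝ) (ha : 0 ≤ a)
    (hL : ∀ y, ‖L y‖ = a * ‖y‖) (m : ContinuousMultilinearMap ℝ (fun _ : Fin k => E) F) :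
    ‖L.compContinuousMultilinearMap m‖ = a * ‖m‖ := by
  refine le_antisymm (ContinuousMultilinearMap.opNorm_le_bound (by positivity) fun h => ?_) ?_
  · have : ‖L.compContinuousMultilinearMap m h‖ = a * ‖m h‖ := by
      simp [ContinuousLinearMap.compContinuousMultilinearMap_coe, hL]
    rw [this, mul_assoc]
    exact mul_le_mul_of_nonneg_left (m.le_opNorm h) ha
  · rcases eq_or_lt_of_le ha with h0 | hpos
    · simpa [← h0] using norm_nonneg _
    · have hm : ‖m‖ ≤ a⁻¹ * ‖L.compContinuousMultilinearMap m‖ := by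
        refine ContinuousMultilinearMap.opNorm_le_bound (by positivity) fun h => ?_
        have h1 : ‖m h‖ = a⁻¹ * ‖L (m h)‖ := by
          rw [hL]; field_simp
        rw [h1, mul_assoc]
        refine mul_le_mul_of_nonneg_left ?_ (by positivity)
        exact (L.compContinuousMultilinearMap m).le_opNorm h
      calc a * ‖m‖ ≤ a * (a⁻¹ * ‖L.compContinuousMultilinearMap m‖) :=
            mul_le_mul_of_nonneg_left hm ha
        _ = ‖L.compContinuousMultilinearMap m‖ := by field_simp

lemma compCMM_sub {k : ℕ} (L : F →L[ℝ] G)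
    (m m' : ContinuousMultilinearMap ℝ (fun _ : Fin k => E) F) :
    L.compContinuousMultilinearMap (m - m') =
      L.compContinuousMultilinearMap m - L.compContinuousMultilinearMap m' := by
  ext h
  simp

lemma iFD_comp {k : ℕ} (L : F →L[ℝ] G) {u : E → F} (hu : ContDiff ℝ (⌊θ⌋₊ : ℕ) u)
    (hk : k ≤ ⌊θ⌋₊) (x : E) :
    iteratedFDeriv ℝ k (fun y => L (u y)) x =
      L.compContinuousMultilinearMap (iteratedFDeriv ℝ k u x) :=
  L.iteratedFDeriv_comp_left hu.contDiffAt (by exact_mod_cast hk)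

lemma memC_comp (L : F →L[ℝ] G) {u : E → F} (hu : memC θ u) :
    memC θ (fun x => L (u x)) := by
  obtain ⟨hcd, hbd, hH⟩ := hu
  refine ⟨L.contDiff.comp hcd, fun k hk => ?_, ?_⟩
  · obtain ⟨C, hC⟩ := hbd k hk
    refine ⟨‖L‖ * C, fun r hr => ?_⟩
    obtain ⟨x, rfl⟩ := hr
    show ‖iteratedFDeriv ℝ k (fun x => L (u x)) x‖ ≤ ‖L‖ * C
    rw [iFD_comp L hcd hk]
    refine (L.norm_compContinuousMultilinearMap_le _).trans ?_
    exact mul_le_mul_of_nonneg_left (hC ⟨x, rfl⟩) (norm_nonneg L)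
  · obtain ⟨C, hC⟩ := hH
    refine ⟨‖L‖ * C, fun r hr => ?_⟩
    obtain ⟨q, rfl⟩ := hr
    show ‖iteratedFDeriv ℝ ⌊θ⌋₊ (fun x => L (u x)) q.1.1 -
        iteratedFDeriv ℝ ⌊θ⌋₊ (fun x => L (u x)) q.1.2‖ /
        ‖q.1.1 - q.1.2‖ ^ (θ - (⌊θ⌋₊:ℝ)) ≤ ‖L‖ * C
    rw [iFD_comp L hcd le_rfl, iFD_comp L hcd le_rfl, ← compCMM_sub]
    rw [div_le_iff₀' (Real.rpow_pos_of_pos (by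
      rw [norm_pos_iff, sub_ne_zero]; exact q.2) _)]
    refine (L.norm_compContinuousMultilinearMap_le _).trans ?_
    have := hC ⟨q, rfl⟩
    rw [div_le_iff₀ (Real.rpow_pos_of_pos (by
      rw [norm_pos_iff, sub_ne_zero]; exact q.2) _)] at this
    calc ‖L‖ * ‖iteratedFDeriv ℝ ⌊θ⌋₊ u q.1.1 - iteratedFDeriv ℝ ⌊θ⌋₊ u q.1.2‖
        ≤ ‖L‖ * (C * ‖q.1.1 - q.1.2‖ ^ (θ - (⌊θ⌋₊:ℝ))) :=
          mul_le_mul_of_nonneg_left this (norm_nonneg L)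
      _ = ‖q.1.1 - q.1.2‖ ^ (θ - (⌊θ⌋₊:ℝ)) * (‖L‖ * C) := by ring

lemma cNorm_comp_eq (L : F →L[ℝ] G) (a : ℝ) (ha : 0 ≤ a) (hL : ∀ y, ‖L y‖ = a * ‖y‖)
    {u : E → F} (hu : ContDiff ℝ (⌊θ⌋₊ : ℕ) u) :
    cNorm θ (fun x => L (u x)) = a * cNorm θ u := by
  unfold cNorm
  rw [mul_add, Finset.mul_sum]
  congr 1
  · refine Finset.sum_congr rfl fun k hk => ?_
    rw [Real.mul_iSup_of_nonneg ha]
    refine iSup_congr fun x => ?_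
    rw [iFD_comp L hu (Finset.mem_range_succ_iff.mp hk), norm_compCMM_eq L a ha hL]
  · rw [Real.mul_iSup_of_nonneg ha]
    refine iSup_congr fun q => ?_
    rw [iFD_comp L hu le_rfl, iFD_comp L hu le_rfl, ← compCMM_sub,
      norm_compCMM_eq L a ha hL, mul_div_assoc]


lemma cNorm_comp_le (L : F →L[ℝ] G) {u : E → F} (hu : memC θ u) :
    cNorm θ (fun x => L (u x)) ≤ ‖L‖ * cNorm θ u := by
  obtain ⟨hcd, hbd, hH⟩ := hu
  unfold cNorm
  rw [mul_add, Finset.mul_sum]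
  refine add_le_add (Finset.sum_le_sum fun k hk => ?_) ?_
  · rw [Real.mul_iSup_of_nonneg (norm_nonneg L)]
    refine Real.iSup_le (fun x => ?_) (Real.iSup_nonneg fun x => by positivity)
    rw [iFD_comp L hcd (Finset.mem_range_succ_iff.mp hk)]
    refine (L.norm_compContinuousMultilinearMap_le _).trans ?_
    refine le_ciSup_of_le ?_ x (mul_le_mul_of_nonneg_left ?_ (norm_nonneg L))
    · obtain ⟨C, hC⟩ := hbd k (Finset.mem_range_succ_iff.mp hk)
      refine ⟨‖L‖ * C, fun r hr => ?_⟩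
      obtain ⟨y, rfl⟩ := hr
      exact mul_le_mul_of_nonneg_left (hC ⟨y, rfl⟩) (norm_nonneg L)
    · rfl
  · rw [Real.mul_iSup_of_nonneg (norm_nonneg L)]
    refine Real.iSup_le (fun q => ?_) (Real.iSup_nonneg fun q => by positivity)
    have hpow : (0:ℝ) < ‖q.1.1 - q.1.2‖ ^ (θ - (⌊θ⌋₊:ℝ)) :=
      Real.rpow_pos_of_pos (by rw [norm_pos_iff, sub_ne_zero]; exact q.2) _
    rw [iFD_comp L hcd le_rfl, iFD_comp L hcd le_rfl, ← compCMM_sub]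
    calc ‖L.compContinuousMultilinearMap (iteratedFDeriv ℝ ⌊θ⌋₊ u q.1.1 -
            iteratedFDeriv ℝ ⌊θ⌋₊ u q.1.2)‖ / ‖q.1.1 - q.1.2‖ ^ (θ - (⌊θ⌋₊:ℝ))
        ≤ (‖L‖ * ‖iteratedFDeriv ℝ ⌊θ⌋₊ u q.1.1 - iteratedFDeriv ℝ ⌊θ⌋₊ u q.1.2‖) /
          ‖q.1.1 - q.1.2‖ ^ (θ - (⌊θ⌋₊:ℝ)) := by
          gcongr
          exact L.norm_compContinuousMultilinearMap_le _
      _ = ‖L‖ * (‖iteratedFDeriv ℝ ⌊θ⌋₊ u q.1.1 - iteratedFDeriv ℝ ⌊θ⌋₊ u q.1.2‖ /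
          ‖q.1.1 - q.1.2‖ ^ (θ - (⌊θ⌋₊:ℝ))) := mul_div_assoc _ _ _
      _ ≤ _ := by
          obtain ⟨C, hC⟩ := hH
          refine le_ciSup (f := fun q : {q : E × E // q.1 ≠ q.2} =>
            ‖L‖ * (‖iteratedFDeriv ℝ ⌊θ⌋₊ u q.1.1 - iteratedFDeriv ℝ ⌊θ⌋₊ u q.1.2‖ /
              ‖q.1.1 - q.1.2‖ ^ (θ - (⌊θ⌋₊:ℝ)))) ?_ q
          refine ⟨‖L‖ * C, fun r hr => ?_⟩
          obtain ⟨p, rfl⟩ := hr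
          exact mul_le_mul_of_nonneg_left (hC ⟨p, rfl⟩) (norm_nonneg L)

lemma memC_smul (a : ℝ) {u : E → F} (hu : memC θ u) :
    memC θ (fun x => a • u x) := by
  have : (fun x => a • u x) = fun x => (a • (ContinuousLinearMap.id ℝ F)) (u x) := by
    funext x; simp
  rw [this]; exact memC_comp _ hu

lemma cNorm_smul (a : ℝ) {u : E → F} (hu : ContDiff ℝ (⌊θ⌋₊ : ℕ) u) :
    cNorm θ (fun x => a • u x) = |a| * cNorm θ u := by
  have : (fun x => a • u x) = fun x => (a • (ContinuousLinearMap.id ℝ F)) (u x) := by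
    funext x; simp
  rw [this]
  exact cNorm_comp_eq _ |a| (abs_nonneg a) (fun y => by
    simp [norm_smul, Real.norm_eq_abs]) hu

lemma memC_smulc {v : E → ℝ} (c : F) (hv : memC θ v) :
    memC θ (fun z => v z • c) := by
  have : (fun z => v z • c) =
      fun z => ((ContinuousLinearMap.id ℝ ℝ).smulRight c) (v z) := by
    funext z; simp
  rw [this]; exact memC_comp _ hv

lemma cNorm_smulc {v : E → ℝ} (c : F) (hv : ContDiff ℝ (⌊θ⌋₊ : ℕ) v) :
    cNorm θ (fun z => v z • c) = ‖c‖ * cNorm θ v := by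
  have : (fun z => v z • c) =
      fun z => ((ContinuousLinearMap.id ℝ ℝ).smulRight c) (v z) := by
    funext z; simp
  rw [this]
  exact cNorm_comp_eq _ ‖c‖ (norm_nonneg c) (fun y => by
    simp [norm_smul, mul_comm]) hv

lemma memC_add {u v : E → F} (hu : memC θ u) (hv : memC θ v) :
    memC θ (fun x => u x + v x) := by
  obtain ⟨hcd, hbd, hH⟩ := hu
  obtain ⟨hcd', hbd', hH'⟩ := hv
  have hiFD : ∀ k, k ≤ ⌊θ⌋₊ → ∀ x : E, iteratedFDeriv ℝ k (fun x => u x + v x) x =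
      iteratedFDeriv ℝ k u x + iteratedFDeriv ℝ k v x := fun k hk x =>
    iteratedFDeriv_add_apply' (show ContDiffAt ℝ k u x from hcd.contDiffAt.of_le (by exact_mod_cast hk))
      (show ContDiffAt ℝ k v x from hcd'.contDiffAt.of_le (by exact_mod_cast hk))
  refine ⟨hcd.add hcd', fun k hk => ?_, ?_⟩
  · obtain ⟨C, hC⟩ := hbd k hk
    obtain ⟨C', hC'⟩ := hbd' k hk
    refine ⟨C + C', fun r hr => ?_⟩
    obtain ⟨x, rfl⟩ := hr
    show ‖iteratedFDeriv ℝ k (fun x => u x + v x) x‖ ≤ C + C'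
    rw [hiFD k hk x]
    exact (norm_add_le _ _).trans (add_le_add (hC ⟨x, rfl⟩) (hC' ⟨x, rfl⟩))
  · obtain ⟨C, hC⟩ := hH
    obtain ⟨C', hC'⟩ := hH'
    refine ⟨C + C', fun r hr => ?_⟩
    obtain ⟨q, rfl⟩ := hr
    show ‖iteratedFDeriv ℝ ⌊θ⌋₊ (fun x => u x + v x) q.1.1 -
        iteratedFDeriv ℝ ⌊θ⌋₊ (fun x => u x + v x) q.1.2‖ /
        ‖q.1.1 - q.1.2‖ ^ (θ - (⌊θ⌋₊:ℝ)) ≤ C + C'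
    rw [hiFD _ le_rfl, hiFD _ le_rfl]
    have : iteratedFDeriv ℝ ⌊θ⌋₊ u q.1.1 + iteratedFDeriv ℝ ⌊θ⌋₊ v q.1.1 -
        (iteratedFDeriv ℝ ⌊θ⌋₊ u q.1.2 + iteratedFDeriv ℝ ⌊θ⌋₊ v q.1.2) =
        (iteratedFDeriv ℝ ⌊θ⌋₊ u q.1.1 - iteratedFDeriv ℝ ⌊θ⌋₊ u q.1.2) +
        (iteratedFDeriv ℝ ⌊θ⌋₊ v q.1.1 - iteratedFDeriv ℝ ⌊θ⌋₊ v q.1.2) := by abel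
    have hpow : (0:ℝ) < ‖q.1.1 - q.1.2‖ ^ (θ - (⌊θ⌋₊:ℝ)) :=
      Real.rpow_pos_of_pos (by rw [norm_pos_iff, sub_ne_zero]; exact q.2) _
    rw [this]
    calc ‖(iteratedFDeriv ℝ ⌊θ⌋₊ u q.1.1 - iteratedFDeriv ℝ ⌊θ⌋₊ u q.1.2) +
            (iteratedFDeriv ℝ ⌊θ⌋₊ v q.1.1 - iteratedFDeriv ℝ ⌊θ⌋₊ v q.1.2)‖ /
          ‖q.1.1 - q.1.2‖ ^ (θ - (⌊θ⌋₊:ℝ))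
        ≤ (‖iteratedFDeriv ℝ ⌊θ⌋₊ u q.1.1 - iteratedFDeriv ℝ ⌊θ⌋₊ u q.1.2‖ +
            ‖iteratedFDeriv ℝ ⌊θ⌋₊ v q.1.1 - iteratedFDeriv ℝ ⌊θ⌋₊ v q.1.2‖) /
          ‖q.1.1 - q.1.2‖ ^ (θ - (⌊θ⌋₊:ℝ)) := by
          gcongr
          exact norm_add_le _ _
      _ = _ := add_div _ _ _
      _ ≤ C + C' := add_le_add (hC ⟨q, rfl⟩) (hC' ⟨q, rfl⟩)

lemma cNorm_add_le {u v : E → F} (hu : memC θ u) (hv : memC θ v) :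
    cNorm θ (fun x => u x + v x) ≤ cNorm θ u + cNorm θ v := by
  obtain ⟨hcd, hbd, hH⟩ := hu
  obtain ⟨hcd', hbd', hH'⟩ := hv
  have hiFD : ∀ k, k ≤ ⌊θ⌋₊ → ∀ x : E, iteratedFDeriv ℝ k (fun x => u x + v x) x =
      iteratedFDeriv ℝ k u x + iteratedFDeriv ℝ k v x := fun k hk x =>
    iteratedFDeriv_add_apply' (show ContDiffAt ℝ k u x from hcd.contDiffAt.of_le (by exact_mod_cast hk))
      (show ContDiffAt ℝ k v x from hcd'.contDiffAt.of_le (by exact_mod_cast hk))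
  unfold cNorm
  rw [add_add_add_comm, ← Finset.sum_add_distrib]
  refine add_le_add (Finset.sum_le_sum fun k hk => ?_) ?_
  · replace hk := Finset.mem_range_succ_iff.mp hk
    refine Real.iSup_le (fun x => ?_)
      (add_nonneg (Real.iSup_nonneg fun x => norm_nonneg _)
        (Real.iSup_nonneg fun x => norm_nonneg _))
    rw [hiFD k hk x]
    refine (norm_add_le _ _).trans (add_le_add ?_ ?_)
    · exact le_ciSup (hbd k hk) x
    · exact le_ciSup (hbd' k hk) x
  · refine Real.iSup_le (fun q => ?_)
      (add_nonneg (Real.iSup_nonneg fun q => by positivity)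
        (Real.iSup_nonneg fun q => by positivity))
    have hpow : (0:ℝ) < ‖q.1.1 - q.1.2‖ ^ (θ - (⌊θ⌋₊:ℝ)) :=
      Real.rpow_pos_of_pos (by rw [norm_pos_iff, sub_ne_zero]; exact q.2) _
    rw [hiFD _ le_rfl, hiFD _ le_rfl]
    have : iteratedFDeriv ℝ ⌊θ⌋₊ u q.1.1 + iteratedFDeriv ℝ ⌊θ⌋₊ v q.1.1 -
        (iteratedFDeriv ℝ ⌊θ⌋₊ u q.1.2 + iteratedFDeriv ℝ ⌊θ⌋₊ v q.1.2) =
        (iteratedFDeriv ℝ ⌊θ⌋₊ u q.1.1 - iteratedFDeriv ℝ ⌊θ⌋₊ u q.1.2) +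
        (iteratedFDeriv ℝ ⌊θ⌋₊ v q.1.1 - iteratedFDeriv ℝ ⌊θ⌋₊ v q.1.2) := by abel
    rw [this]
    calc ‖(iteratedFDeriv ℝ ⌊θ⌋₊ u q.1.1 - iteratedFDeriv ℝ ⌊θ⌋₊ u q.1.2) +
            (iteratedFDeriv ℝ ⌊θ⌋₊ v q.1.1 - iteratedFDeriv ℝ ⌊θ⌋₊ v q.1.2)‖ /
          ‖q.1.1 - q.1.2‖ ^ (θ - (⌊θ⌋₊:ℝ))
        ≤ (‖iteratedFDeriv ℝ ⌊θ⌋₊ u q.1.1 - iteratedFDeriv ℝ ⌊θ⌋₊ u q.1.2‖ +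
            ‖iteratedFDeriv ℝ ⌊θ⌋₊ v q.1.1 - iteratedFDeriv ℝ ⌊θ⌋₊ v q.1.2‖) /
          ‖q.1.1 - q.1.2‖ ^ (θ - (⌊θ⌋₊:ℝ)) := by
          gcongr
          exact norm_add_le _ _
      _ = _ := add_div _ _ _
      _ ≤ _ := add_le_add (le_ciSup hH q) (le_ciSup hH' q)

lemma memC_sum {ι : Type*} (s : Finset ι) (φ : ι → E → F)
    (h : ∀ i ∈ s, memC θ (φ i)) :
    memC θ (fun x => ∑ i ∈ s, φ i x) := by
  classical
  induction s using Finset.cons_induction with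
  | empty => simpa using (memC_zero : memC θ (fun _ : E => (0:F)))
  | cons a s ha ih =>
    simp only [Finset.sum_cons]
    exact memC_add (h a (Finset.mem_cons_self a s))
      (ih fun i hi => h i (Finset.mem_cons_of_mem hi))

lemma cNorm_sum_le {ι : Type*} (s : Finset ι) (φ : ι → E → F)
    (h : ∀ i ∈ s, memC θ (φ i)) :
    cNorm θ (fun x => ∑ i ∈ s, φ i x) ≤ ∑ i ∈ s, cNorm θ (φ i) := by
  classical
  induction s using Finset.cons_induction with
  | empty => simpa using le_of_eq (cNorm_zero : cNorm θ (fun _ : E => (0:F)) = 0)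
  | cons a s ha ih =>
    simp only [Finset.sum_cons]
    refine (cNorm_add_le (h a (Finset.mem_cons_self a s))
      (memC_sum s φ fun i hi => h i (Finset.mem_cons_of_mem hi))).trans ?_
    exact add_le_add le_rfl (ih fun i hi => h i (Finset.mem_cons_of_mem hi))


lemma norm_iFD_le_cNorm {u : E → F} (hu : memC θ u) {k : ℕ} (hk : k ≤ ⌊θ⌋₊) (x : E) :
    ‖iteratedFDeriv ℝ k u x‖ ≤ cNorm θ u := by
  unfold cNorm
  refine le_add_of_le_of_nonneg ?_ (Real.iSup_nonneg fun q => by positivity)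
  refine le_trans (le_ciSup (hu.2.1 k hk) x) ?_
  exact Finset.single_le_sum (f := fun k => ⨆ x : E, ‖iteratedFDeriv ℝ k u x‖)
    (fun i _ => Real.iSup_nonneg fun x => norm_nonneg _) (Finset.mem_range_succ_iff.mpr hk)

lemma eq_zero_of_cNorm_eq_zero {u : E → F} (hu : memC θ u) (h0 : cNorm θ u = 0) (x : E) :
    u x = 0 := by
  have h := norm_iFD_le_cNorm hu (Nat.zero_le _) x
  rw [norm_iteratedFDeriv_zero, h0] at h
  simpa using le_antisymm h (norm_nonneg _)

lemma opn (T : (E → ℝ) →ₗ[ℝ] ℝ) (N : ℝ)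
    (hN : ∀ v : E → ℝ, memC θ v → cNorm θ v ≤ 1 → |T v| ≤ N)
    {u : E → ℝ} (hu : memC θ u) : |T u| ≤ N * cNorm θ u := by
  have hN0 : 0 ≤ N := by
    have := hN (fun _ => 0) memC_zero (le_of_eq_of_le cNorm_zero zero_le_one)
    have h2 : T (fun _ => 0) = 0 := by
      have : (fun _ : E => (0:ℝ)) = (0 : E → ℝ) := rfl
      rw [this, map_zero]
    rw [h2, abs_zero] at this
    exact this
  rcases eq_or_lt_of_le (cNorm_nonneg (θ := θ) u) with h0 | hpos
  · have hu0 : u = (0 : E → ℝ) := funext fun x => eq_zero_of_cNorm_eq_zero hu h0.symm x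
    rw [hu0, map_zero, abs_zero]
    exact mul_nonneg hN0 (cNorm_nonneg _)
  · set c := cNorm θ u with hc
    have hmem := memC_smul c⁻¹ hu
    have hcc : cNorm θ (fun x => c⁻¹ • u x) = 1 := by
      rw [cNorm_smul _ hu.1, abs_of_pos (inv_pos.mpr hpos), ← hc, inv_mul_cancel₀ hpos.ne']
    have h1 := hN _ hmem (le_of_eq hcc)
    have h2 : T u = c * T (fun x => c⁻¹ • u x) := by
      have e : (c • fun x => c⁻¹ • u x) = u := funext fun x => by
        simp only [Pi.smul_apply, smul_smul, mul_inv_cancel₀ hpos.ne', one_smul]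
      calc T u = T (c • fun x => c⁻¹ • u x) := by rw [e]
        _ = c * T (fun x => c⁻¹ • u x) := by rw [map_smul]; rfl
    rw [h2, abs_mul, abs_of_pos hpos, mul_comm N c]
    exact mul_le_mul_of_nonneg_left h1 hpos.le

/-- Evaluation of a continuous multilinear map at a fixed tuple, as a CLM. -/
noncomputable def evalCLM (k : ℕ) (h : Fin k → E) :
    ContinuousMultilinearMap ℝ (fun _ : Fin k => E) ℝ →L[ℝ] ℝ :=
  LinearMap.mkContinuous
    { toFun := fun m => m h
      map_add' := fun m m' => rfl
      map_smul' := fun a m => rfl }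
    (∏ i, ‖h i‖) (fun m => by
      simpa [mul_comm] using m.le_opNorm h)

lemma iFD_lincomb {n k : ℕ} (us : Fin n → E → F) (a : Fin n → ℝ)
    (hus : ∀ i, ContDiff ℝ (⌊θ⌋₊ : ℕ) (us i)) (hk : k ≤ ⌊θ⌋₊) (x : E) :
    iteratedFDeriv ℝ k (fun y => ∑ i, a i • us i y) x =
      ∑ i, a i • iteratedFDeriv ℝ k (us i) x := by
  have hcd : ∀ i : Fin n, i ∈ Finset.univ → ContDiff ℝ (k : ℕ∞) (fun y => a i • us i y) :=
    fun i _ => ((hus i).of_le (by exact_mod_cast hk)).const_smul (a i)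
  have h1 := iteratedFDeriv_sum (𝕜 := ℝ) (f := fun i : Fin n => fun y => a i • us i y)
    (u := Finset.univ) (i := k) hcd
  have h2 : iteratedFDeriv ℝ k (fun y => ∑ i, a i • us i y) x
      = ∑ i, iteratedFDeriv ℝ k (fun y => a i • us i y) x := by
    have := congrFun h1 x
    simpa using this
  rw [h2]
  exact Finset.sum_congr rfl fun i _ =>
    iteratedFDeriv_const_smul_apply' (show ContDiffAt ℝ k (us i) x from (hus i).contDiffAt.of_le (by exact_mod_cast hk))

lemma key0 {n k : ℕ} (vs : Fin n → E → ℝ) (hvs : ∀ i, memC θ (vs i))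
    (g : (E → ℝ) →ₗ[ℝ] ℝ) (Ng : ℝ) (hNg : 0 ≤ Ng)
    (hg : ∀ v, memC θ v → |g v| ≤ Ng * cNorm θ v)
    (c : Fin n → ContinuousMultilinearMap ℝ (fun _ : Fin k => E) ℝ) :
    ‖∑ i, g (vs i) • c i‖ ≤ Ng * cNorm θ (fun z => ∑ i, vs i z • c i) := by
  set Φ : E → ContinuousMultilinearMap ℝ (fun _ : Fin k => E) ℝ :=
    fun z => ∑ i, vs i z • c i with hΦ
  have hΦmem : memC θ Φ :=
    memC_sum Finset.univ (fun i => fun z => vs i z • c i)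
      (fun i _ => memC_smulc (c i) (hvs i))
  refine ContinuousMultilinearMap.opNorm_le_bound
    (mul_nonneg hNg (cNorm_nonneg _)) fun h => ?_
  set ψ : E → ℝ := fun z => evalCLM k h (Φ z) with hψ
  have hψmem : memC θ ψ := memC_comp _ hΦmem
  have e1 : (∑ i, g (vs i) • c i) h = g ψ := by
    rw [ContinuousMultilinearMap.sum_apply]
    have e2 : ψ = ∑ i, (c i) h • vs i := by
      funext z
      simp only [hψ, hΦ, evalCLM, LinearMap.mkContinuous_apply, LinearMap.coe_mk,
        AddHom.coe_mk, ContinuousMultilinearMap.sum_apply,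
        ContinuousMultilinearMap.smul_apply, Finset.sum_apply, Pi.smul_apply,
        smul_eq_mul]
      exact Finset.sum_congr rfl fun i _ => mul_comm _ _
    rw [e2, map_sum]
    exact Finset.sum_congr rfl fun i _ => by
      rw [map_smul, ContinuousMultilinearMap.smul_apply]
      simp [mul_comm]
  have e3 : cNorm θ ψ ≤ (∏ i, ‖h i‖) * cNorm θ Φ := by
    refine (cNorm_comp_le (evalCLM k h) hΦmem).trans ?_
    refine mul_le_mul_of_nonneg_right ?_ (cNorm_nonneg _)
    exact LinearMap.mkContinuous_norm_le _ (Finset.prod_nonneg fun i _ => norm_nonneg _) _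
  calc ‖(∑ i, g (vs i) • c i) h‖ = |g ψ| := by rw [e1]; rfl
    _ ≤ Ng * cNorm θ ψ := hg ψ hψmem
    _ ≤ Ng * ((∏ i, ‖h i‖) * cNorm θ Φ) := mul_le_mul_of_nonneg_left e3 hNg
    _ = Ng * cNorm θ Φ * ∏ i, ‖h i‖ := by ring

end Lemmas
lemma part1 {E : Type*} [NormedAddCommGroup E] [NormedSpace ℝ E] {θ : ℝ}
    {u v : E → ℝ} (hu : memC θ u) (hv : memC θ v) :
    cθθNorm θ (fun p => u p.1 * v p.2) = cNorm θ u * cNorm θ v := by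
  simp only [cθθNorm]
  have hA : ∀ k, k ≤ ⌊θ⌋₊ → ∀ x z : E,
      iteratedFDeriv ℝ k (fun x' => u x' * v z) x = v z • iteratedFDeriv ℝ k u x := by
    intro k hk x z
    have e : (fun x' => u x' * v z) = fun x' => v z • u x' := by
      funext x'; simp [smul_eq_mul, mul_comm]
    rw [e, iteratedFDeriv_const_smul_apply' (show ContDiffAt ℝ k u x from hu.1.contDiffAt.of_le (by exact_mod_cast hk))]
  have hsum : ∀ k ∈ Finset.range (⌊θ⌋₊+1),
      (⨆ x : E, cNorm θ fun z => iteratedFDeriv ℝ k (fun x' => u x' * v z) x)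
        = (⨆ x : E, ‖iteratedFDeriv ℝ k u x‖) * cNorm θ v := by
    intro k hk
    rw [Real.iSup_mul_of_nonneg (cNorm_nonneg _)]
    refine iSup_congr fun x => ?_
    have e : (fun z => iteratedFDeriv ℝ k (fun x' => u x' * v z) x)
        = fun z => v z • iteratedFDeriv ℝ k u x :=
      funext fun z => hA k (Finset.mem_range_succ_iff.mp hk) x z
    rw [e, cNorm_smulc _ hv.1]
  have hH : (⨆ q : {q : E × E // q.1 ≠ q.2}, (cNorm θ fun z =>
        iteratedFDeriv ℝ ⌊θ⌋₊ (fun x' => u x' * v z) q.1.1 -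
        iteratedFDeriv ℝ ⌊θ⌋₊ (fun x' => u x' * v z) q.1.2) /
          ‖q.1.1 - q.1.2‖ ^ (θ - (⌊θ⌋₊:ℝ)))
      = (⨆ q : {q : E × E // q.1 ≠ q.2},
          ‖iteratedFDeriv ℝ ⌊θ⌋₊ u q.1.1 - iteratedFDeriv ℝ ⌊θ⌋₊ u q.1.2‖ /
            ‖q.1.1 - q.1.2‖ ^ (θ - (⌊θ⌋₊:ℝ))) * cNorm θ v := by
    rw [Real.iSup_mul_of_nonneg (cNorm_nonneg _)]
    refine iSup_congr fun q => ?_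
    have e : (fun z => iteratedFDeriv ℝ ⌊θ⌋₊ (fun x' => u x' * v z) q.1.1 -
        iteratedFDeriv ℝ ⌊θ⌋₊ (fun x' => u x' * v z) q.1.2)
        = fun z => v z • (iteratedFDeriv ℝ ⌊θ⌋₊ u q.1.1 - iteratedFDeriv ℝ ⌊θ⌋₊ u q.1.2) := by
      funext z
      rw [hA _ le_rfl q.1.1 z, hA _ le_rfl q.1.2 z, smul_sub]
    rw [e, cNorm_smulc _ hv.1, mul_div_right_comm]
  rw [Finset.sum_congr rfl hsum, hH, ← Finset.sum_mul, ← add_mul]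
  rfl


lemma keyIneq {E : Type*} [NormedAddCommGroup E] [NormedSpace ℝ E] {θ : ℝ} {n : ℕ}
    (us vs : Fin n → E → ℝ) (hus : ∀ i, memC θ (us i)) (hvs : ∀ i, memC θ (vs i))
    (g : (E → ℝ) →ₗ[ℝ] ℝ) (Ng : ℝ) (hNg : 0 ≤ Ng)
    (hg : ∀ v, memC θ v → |g v| ≤ Ng * cNorm θ v) :
    cNorm θ (fun x => ∑ i, g (vs i) • us i x) ≤
      Ng * cθθNorm θ (fun p => ∑ i, us i p.1 * vs i p.2) := by
  simp only [cθθNorm]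
  have hw : ∀ k, k ≤ ⌊θ⌋₊ → ∀ x z : E,
      iteratedFDeriv ℝ k (fun x' => ∑ i, us i x' * vs i z) x
        = ∑ i, vs i z • iteratedFDeriv ℝ k (us i) x := by
    intro k hk x z
    have e : (fun x' => ∑ i, us i x' * vs i z) = fun x' => ∑ i, vs i z • us i x' := by
      funext x'
      exact Finset.sum_congr rfl fun i _ => by simp [smul_eq_mul, mul_comm]
    rw [e, iFD_lincomb us (fun i => vs i z) (fun i => (hus i).1) hk x]
  have hF : ∀ k, k ≤ ⌊θ⌋₊ → ∀ x : E,
      iteratedFDeriv ℝ k (fun y => ∑ i, g (vs i) • us i y) x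
        = ∑ i, g (vs i) • iteratedFDeriv ℝ k (us i) x :=
    fun k hk x => iFD_lincomb us (fun i => g (vs i)) (fun i => (hus i).1) hk x
  unfold cNorm
  rw [mul_add, Finset.mul_sum]
  refine add_le_add (Finset.sum_le_sum fun k hk => ?_) ?_
  · replace hk := Finset.mem_range_succ_iff.mp hk
    have hbdd : BddAbove (range fun x : E => cNorm θ fun z =>
        iteratedFDeriv ℝ k (fun x' => ∑ i, us i x' * vs i z) x) := by
      choose C hC using fun i => (hus i).2.1 k hk
      refine ⟨∑ i, C i * cNorm θ (vs i), fun r hr => ?_⟩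
      obtain ⟨x, rfl⟩ := hr
      show cNorm θ (fun z => iteratedFDeriv ℝ k (fun x' => ∑ i, us i x' * vs i z) x) ≤ _
      have e : (fun z => iteratedFDeriv ℝ k (fun x' => ∑ i, us i x' * vs i z) x)
          = fun z => ∑ i, vs i z • iteratedFDeriv ℝ k (us i) x := funext fun z => hw k hk x z
      rw [e]
      refine (cNorm_sum_le Finset.univ
        (fun i => fun z => vs i z • iteratedFDeriv ℝ k (us i) x)
        (fun i _ => memC_smulc _ (hvs i))).trans ?_
      refine Finset.sum_le_sum fun i _ => ?_
      rw [cNorm_smulc _ (hvs i).1]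
      exact mul_le_mul_of_nonneg_right (hC i ⟨x, rfl⟩) (cNorm_nonneg _)
    refine Real.iSup_le (fun x => ?_)
      (mul_nonneg hNg (Real.iSup_nonneg fun x => cNorm_nonneg _))
    rw [hF k hk x]
    refine (key0 vs hvs g Ng hNg hg _).trans ?_
    refine mul_le_mul_of_nonneg_left ?_ hNg
    have e : (fun z => ∑ i, vs i z • iteratedFDeriv ℝ k (us i) x)
        = fun z => iteratedFDeriv ℝ k (fun x' => ∑ i, us i x' * vs i z) x :=
      funext fun z => (hw k hk x z).symm
    rw [e]
    exact le_ciSup hbdd x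
  · have hdiff : ∀ q : {q : E × E // q.1 ≠ q.2},
        (fun z => iteratedFDeriv ℝ ⌊θ⌋₊ (fun x' => ∑ i, us i x' * vs i z) q.1.1 -
            iteratedFDeriv ℝ ⌊θ⌋₊ (fun x' => ∑ i, us i x' * vs i z) q.1.2)
          = fun z => ∑ i, vs i z • (iteratedFDeriv ℝ ⌊θ⌋₊ (us i) q.1.1 -
              iteratedFDeriv ℝ ⌊θ⌋₊ (us i) q.1.2) := by
      intro q
      funext z
      rw [hw _ le_rfl q.1.1 z, hw _ le_rfl q.1.2 z, ← Finset.sum_sub_distrib]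
      exact Finset.sum_congr rfl fun i _ => (smul_sub _ _ _).symm
    have hbddH : BddAbove (range fun q : {q : E × E // q.1 ≠ q.2} =>
        (cNorm θ fun z =>
          iteratedFDeriv ℝ ⌊θ⌋₊ (fun x' => ∑ i, us i x' * vs i z) q.1.1 -
          iteratedFDeriv ℝ ⌊θ⌋₊ (fun x' => ∑ i, us i x' * vs i z) q.1.2) /
          ‖q.1.1 - q.1.2‖ ^ (θ - (⌊θ⌋₊:ℝ))) := by
      choose H hH using fun i => (hus i).2.2
      refine ⟨∑ i, H i * cNorm θ (vs i), fun r hr => ?_⟩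
      obtain ⟨q, rfl⟩ := hr
      show (cNorm θ fun z =>
          iteratedFDeriv ℝ ⌊θ⌋₊ (fun x' => ∑ i, us i x' * vs i z) q.1.1 -
          iteratedFDeriv ℝ ⌊θ⌋₊ (fun x' => ∑ i, us i x' * vs i z) q.1.2) /
          ‖q.1.1 - q.1.2‖ ^ (θ - (⌊θ⌋₊:ℝ)) ≤ _
      have hpow : (0:ℝ) < ‖q.1.1 - q.1.2‖ ^ (θ - (⌊θ⌋₊:ℝ)) :=
        Real.rpow_pos_of_pos (by rw [norm_pos_iff, sub_ne_zero]; exact q.2) _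
      rw [hdiff q]
      have h1 : cNorm θ (fun z => ∑ i, vs i z • (iteratedFDeriv ℝ ⌊θ⌋₊ (us i) q.1.1 -
          iteratedFDeriv ℝ ⌊θ⌋₊ (us i) q.1.2)) ≤
          ∑ i, ‖iteratedFDeriv ℝ ⌊θ⌋₊ (us i) q.1.1 -
            iteratedFDeriv ℝ ⌊θ⌋₊ (us i) q.1.2‖ * cNorm θ (vs i) := by
        refine (cNorm_sum_le Finset.univ
          (fun i => fun z => vs i z • (iteratedFDeriv ℝ ⌊θ⌋₊ (us i) q.1.1 -
            iteratedFDeriv ℝ ⌊θ⌋₊ (us i) q.1.2))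
          (fun i _ => memC_smulc _ (hvs i))).trans ?_
        refine Finset.sum_le_sum fun i _ => ?_
        rw [cNorm_smulc _ (hvs i).1]
      calc cNorm θ (fun z => ∑ i, vs i z • (iteratedFDeriv ℝ ⌊θ⌋₊ (us i) q.1.1 -
              iteratedFDeriv ℝ ⌊θ⌋₊ (us i) q.1.2)) / ‖q.1.1 - q.1.2‖ ^ (θ - (⌊θ⌋₊:ℝ))
          ≤ (∑ i, ‖iteratedFDeriv ℝ ⌊θ⌋₊ (us i) q.1.1 -
              iteratedFDeriv ℝ ⌊θ⌋₊ (us i) q.1.2‖ * cNorm θ (vs i)) /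
              ‖q.1.1 - q.1.2‖ ^ (θ - (⌊θ⌋₊:ℝ)) := by gcongr
        _ = ∑ i, (‖iteratedFDeriv ℝ ⌊θ⌋₊ (us i) q.1.1 -
              iteratedFDeriv ℝ ⌊θ⌋₊ (us i) q.1.2‖ / ‖q.1.1 - q.1.2‖ ^ (θ - (⌊θ⌋₊:ℝ))) *
              cNorm θ (vs i) := by
            rw [Finset.sum_div]
            exact Finset.sum_congr rfl fun i _ => mul_div_right_comm _ _ _
        _ ≤ ∑ i, H i * cNorm θ (vs i) := Finset.sum_le_sum fun i _ =>
            mul_le_mul_of_nonneg_right (hH i ⟨q, rfl⟩) (cNorm_nonneg _)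
    refine Real.iSup_le (fun q => ?_) (mul_nonneg hNg (Real.iSup_nonneg fun q =>
      div_nonneg (cNorm_nonneg _) (Real.rpow_nonneg (norm_nonneg _) _)))
    have hpow : (0:ℝ) < ‖q.1.1 - q.1.2‖ ^ (θ - (⌊θ⌋₊:ℝ)) :=
      Real.rpow_pos_of_pos (by rw [norm_pos_iff, sub_ne_zero]; exact q.2) _
    rw [hF _ le_rfl q.1.1, hF _ le_rfl q.1.2]
    have e1 : (∑ i, g (vs i) • iteratedFDeriv ℝ ⌊θ⌋₊ (us i) q.1.1) -
        ∑ i, g (vs i) • iteratedFDeriv ℝ ⌊θ⌋₊ (us i) q.1.2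
        = ∑ i, g (vs i) • (iteratedFDeriv ℝ ⌊θ⌋₊ (us i) q.1.1 -
            iteratedFDeriv ℝ ⌊θ⌋₊ (us i) q.1.2) := by
      rw [← Finset.sum_sub_distrib]
      exact Finset.sum_congr rfl fun i _ => (smul_sub _ _ _).symm
    rw [e1]
    have h2 := key0 vs hvs g Ng hNg hg (fun i => iteratedFDeriv ℝ ⌊θ⌋₊ (us i) q.1.1 -
      iteratedFDeriv ℝ ⌊θ⌋₊ (us i) q.1.2)
    rw [(hdiff q).symm] at h2
    calc ‖∑ i, g (vs i) • (iteratedFDeriv ℝ ⌊θ⌋₊ (us i) q.1.1 -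
            iteratedFDeriv ℝ ⌊θ⌋₊ (us i) q.1.2)‖ / ‖q.1.1 - q.1.2‖ ^ (θ - (⌊θ⌋₊:ℝ))
        ≤ (Ng * cNorm θ (fun z =>
            iteratedFDeriv ℝ ⌊θ⌋₊ (fun x' => ∑ i, us i x' * vs i z) q.1.1 -
            iteratedFDeriv ℝ ⌊θ⌋₊ (fun x' => ∑ i, us i x' * vs i z) q.1.2)) /
            ‖q.1.1 - q.1.2‖ ^ (θ - (⌊θ⌋₊:ℝ)) := by gcongr
      _ = Ng * ((cNorm θ (fun z =>
            iteratedFDeriv ℝ ⌊θ⌋₊ (fun x' => ∑ i, us i x' * vs i z) q.1.1 -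
            iteratedFDeriv ℝ ⌊θ⌋₊ (fun x' => ∑ i, us i x' * vs i z) q.1.2)) /
            ‖q.1.1 - q.1.2‖ ^ (θ - (⌊θ⌋₊:ℝ))) := mul_div_assoc _ _ _
      _ ≤ _ := mul_le_mul_of_nonneg_left (le_ciSup hbddH q) hNg


lemma cθθNorm_zero {E : Type*} [NormedAddCommGroup E] [NormedSpace ℝ E] {θ : ℝ} :
    cθθNorm θ (fun _ : E × E => (0:ℝ)) = 0 := by
  simp only [cθθNorm]
  have h0 : ∀ k : ℕ, ∀ x : E, iteratedFDeriv ℝ k (fun _ : E => (0:ℝ)) x = 0 := by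
    intro k x; rw [iteratedFDeriv_zero_fun]; rfl
  have e1 : ∀ k : ℕ, ∀ x : E,
      (fun z : E => iteratedFDeriv ℝ k (fun _ : E => (0:ℝ)) x) =
        (fun _ : E => (0 : ContinuousMultilinearMap ℝ (fun _ : Fin k => E) ℝ)) := by
    intro k x; funext z; exact h0 k x
  simp only [h0, sub_zero, cNorm_zero, zero_div, real_iSup_zero,
    Finset.sum_const_zero, add_zero]


/-- the tensor norm on `C^θ(ℝ^d) ⊗_a C^θ(ℝ^d)` induced via
`ι(Σ uₙ ⊗ vₙ)(x,z) = Σ uₙ(x) vₙ(z)` from the mixed norm `‖·‖_{C^{θ,θ}}` is admissible: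
`‖u ⊗ v‖ = ‖u‖_{C^θ} ‖v‖_{C^θ}`, and `‖f ⊗ g‖ = ‖f‖ ‖g‖` for bounded linear
functionals `f, g` on `C^θ(ℝ^d)`. -/
theorem stmt6 (d : ℕ) (θ : ℝ) (hθ : 0 < θ) (hθni : ¬ ∃ n : ℕ, θ = n)
    (f g : ((EuclideanSpace ℝ (Fin d) → ℝ)) →ₗ[ℝ] ℝ)
    (Cf Cg : ℝ)
    (hf : ∀ u, memC θ u → |f u| ≤ Cf * cNorm θ u)
    (hg : ∀ u, memC θ u → |g u| ≤ Cg * cNorm θ u) :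
    (∀ u v : EuclideanSpace ℝ (Fin d) → ℝ, memC θ u → memC θ v →
      cθθNorm θ (fun p => u p.1 * v p.2) = cNorm θ u * cNorm θ v) ∧
    sSup {r : ℝ | ∃ (n : ℕ) (us vs : Fin n → (EuclideanSpace ℝ (Fin d) → ℝ)),
        (∀ i, memC θ (us i)) ∧ (∀ i, memC θ (vs i)) ∧
        cθθNorm θ (fun p => ∑ i, us i p.1 * vs i p.2) ≤ 1 ∧
        r = |∑ i, f (us i) * g (vs i)|} =
      sSup {r : ℝ | ∃ u, memC θ u ∧ cNorm θ u ≤ 1 ∧ r = |f u|} *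
        sSup {r : ℝ | ∃ u, memC θ u ∧ cNorm θ u ≤ 1 ∧ r = |g u|} := by
  classical
  refine ⟨fun u v hu hv => part1 hu hv, ?_⟩
  set Tf := {r : ℝ | ∃ u : (EuclideanSpace ℝ (Fin d)) → ℝ, memC θ u ∧ cNorm θ u ≤ 1 ∧ r = |f u|} with hTfdef
  set Tg := {r : ℝ | ∃ u : (EuclideanSpace ℝ (Fin d)) → ℝ, memC θ u ∧ cNorm θ u ≤ 1 ∧ r = |g u|} with hTgdef
  set S := {r : ℝ | ∃ (n : ℕ) (us vs : Fin n → ((EuclideanSpace ℝ (Fin d)) → ℝ)),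
      (∀ i, memC θ (us i)) ∧ (∀ i, memC θ (vs i)) ∧
      cθθNorm θ (fun p => ∑ i, us i p.1 * vs i p.2) ≤ 1 ∧
      r = |∑ i, f (us i) * g (vs i)|} with hSdef
  have hzero_eq : (fun _ : EuclideanSpace ℝ (Fin d) => (0:ℝ)) = (0 : (EuclideanSpace ℝ (Fin d)) → ℝ) := rfl
  have hTf0 : (0:ℝ) ∈ Tf :=
    ⟨(fun _ => 0), memC_zero, le_of_eq_of_le cNorm_zero zero_le_one, by
      rw [hzero_eq, map_zero, abs_zero]⟩
  have hTg0 : (0:ℝ) ∈ Tg :=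
    ⟨(fun _ => 0), memC_zero, le_of_eq_of_le cNorm_zero zero_le_one, by
      rw [hzero_eq, map_zero, abs_zero]⟩
  have hTfbdd : BddAbove Tf := by
    refine ⟨max Cf 0, fun r hr => ?_⟩
    obtain ⟨u, hu, hu1, rfl⟩ := hr
    refine (hf u hu).trans ?_
    nlinarith [cNorm_nonneg (θ := θ) u, le_max_left Cf 0, le_max_right Cf 0]
  have hTgbdd : BddAbove Tg := by
    refine ⟨max Cg 0, fun r hr => ?_⟩
    obtain ⟨u, hu, hu1, rfl⟩ := hr
    refine (hg u hu).trans ?_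
    nlinarith [cNorm_nonneg (θ := θ) u, le_max_left Cg 0, le_max_right Cg 0]
  have hNf0 : 0 ≤ sSup Tf := Real.sSup_nonneg (fun r hr => by
    obtain ⟨u, _, _, rfl⟩ := hr; exact abs_nonneg _)
  have hNg0 : 0 ≤ sSup Tg := Real.sSup_nonneg (fun r hr => by
    obtain ⟨u, _, _, rfl⟩ := hr; exact abs_nonneg _)
  have hfN : ∀ u : (EuclideanSpace ℝ (Fin d)) → ℝ, memC θ u → |f u| ≤ sSup Tf * cNorm θ u := fun u hu =>
    opn f (sSup Tf) (fun v hv hv1 => le_csSup hTfbdd ⟨v, hv, hv1, rfl⟩) hu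
  have hgN : ∀ u : (EuclideanSpace ℝ (Fin d)) → ℝ, memC θ u → |g u| ≤ sSup Tg * cNorm θ u := fun u hu =>
    opn g (sSup Tg) (fun v hv hv1 => le_csSup hTgbdd ⟨v, hv, hv1, rfl⟩) hu
  have hSle : ∀ r ∈ S, r ≤ sSup Tf * sSup Tg := by
    rintro r ⟨n, us, vs, hus, hvs, hw, rfl⟩
    have hmemF : memC θ (fun x => ∑ i, g (vs i) • us i x) :=
      memC_sum Finset.univ _ (fun i _ => memC_smul _ (hus i))
    have e : ∑ i, f (us i) * g (vs i) = f (fun x => ∑ i, g (vs i) • us i x) := by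
      have e2 : (fun x => ∑ i, g (vs i) • us i x) = ∑ i, g (vs i) • us i := by
        funext x; simp
      rw [e2, map_sum]
      refine Finset.sum_congr rfl fun i _ => ?_
      rw [map_smul, smul_eq_mul, mul_comm]
    rw [e]
    calc |f (fun x => ∑ i, g (vs i) • us i x)|
        ≤ sSup Tf * cNorm θ (fun x => ∑ i, g (vs i) • us i x) := hfN _ hmemF
      _ ≤ sSup Tf * (sSup Tg * cθθNorm θ (fun p => ∑ i, us i p.1 * vs i p.2)) :=
          mul_le_mul_of_nonneg_left (keyIneq us vs hus hvs g (sSup Tg) hNg0 hgN) hNf0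
      _ ≤ sSup Tf * (sSup Tg * 1) := by
          refine mul_le_mul_of_nonneg_left (mul_le_mul_of_nonneg_left hw hNg0) hNf0
      _ = sSup Tf * sSup Tg := by ring
  have hSbdd : BddAbove S := ⟨sSup Tf * sSup Tg, fun r hr => hSle r hr⟩
  have hS0 : (0:ℝ) ∈ S := by
    refine ⟨0, fun _ => (fun _ => 0), fun _ => (fun _ => 0), fun _ => memC_zero,
      fun _ => memC_zero, ?_, by simp⟩
    have e : (fun p : (EuclideanSpace ℝ (Fin d)) × (EuclideanSpace ℝ (Fin d)) =>
        ∑ _i : Fin 0, (0:ℝ) * 0)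
        = fun _ : (EuclideanSpace ℝ (Fin d)) × (EuclideanSpace ℝ (Fin d)) => (0:ℝ) := by
      funext p; simp
    rw [e, cθθNorm_zero]
    exact zero_le_one
  have hMS : 0 ≤ sSup S := Real.sSup_nonneg (fun r hr => by
    obtain ⟨n, us, vs, _, _, _, rfl⟩ := hr; exact abs_nonneg _)
  refine le_antisymm (Real.sSup_le hSle (mul_nonneg hNf0 hNg0)) ?_
  have hprod : ∀ r ∈ Tf, ∀ s ∈ Tg, r * s ≤ sSup S := by
    rintro r ⟨u, hu, hu1, rfl⟩ s ⟨v, hv, hv1, rfl⟩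
    refine le_csSup hSbdd ?_
    refine ⟨1, (fun _ => u), (fun _ => v), fun _ => hu, fun _ => hv, ?_, ?_⟩
    · have e : (fun p : (EuclideanSpace ℝ (Fin d)) × (EuclideanSpace ℝ (Fin d)) => ∑ _i : Fin 1, u p.1 * v p.2) = fun p : (EuclideanSpace ℝ (Fin d)) × (EuclideanSpace ℝ (Fin d)) => u p.1 * v p.2 := by
        funext p; simp
      rw [e, part1 hu hv]
      calc cNorm θ u * cNorm θ v ≤ 1 * 1 :=
            mul_le_mul hu1 hv1 (cNorm_nonneg _) zero_le_one
        _ = 1 := mul_one 1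
    · rw [Fin.sum_univ_one, abs_mul]
  rcases eq_or_lt_of_le hNg0 with hg0 | hgpos
  · rw [← hg0, mul_zero]; exact hMS
  · have h1 : sSup Tf ≤ sSup S / sSup Tg := by
      refine csSup_le ⟨0, hTf0⟩ (fun r hr => ?_)
      have hr0 : 0 ≤ r := by obtain ⟨u, _, _, rfl⟩ := hr; exact abs_nonneg _
      rcases eq_or_lt_of_le hr0 with hr0' | hrpos
      · rw [← hr0']; positivity
      · rw [le_div_iff₀ hgpos]
        have h2 : sSup Tg ≤ sSup S / r := by
          refine csSup_le ⟨0, hTg0⟩ (fun s hs => ?_)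
          rw [le_div_iff₀ hrpos, mul_comm]
          exact hprod r hr s hs
        calc r * sSup Tg ≤ r * (sSup S / r) := mul_le_mul_of_nonneg_left h2 hr0
          _ = sSup S := by field_simp
    rw [le_div_iff₀ hgpos] at h1
    exact h1
end
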